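/- For all integers k ≥ 2 and h with 1 ≤ h < k and gcd(h,k) = 1, one has ((1 − k²)/12)·log 2 + (k/12)·log k ≤ C_{h,k} ≤ ((k−1)(k−2)/24)·log 2 − (k/24)·log k. -/

import Mathlib

open Finset Polynomial in
lemma prod_one_sub_root (k : ℕ) (hk0 : 0 < k) :
    ∏ μ ∈ (nthRootsFinset k (1 : ℂ)).erase 1, (1 - μ) = (k : ℂ) := by
  obtain ⟨ζ, hζ⟩ : ∃ ζ : ℂ, IsPrimitiveRoot ζ k :=
    ⟨_, Complex.isPrimitiveRoot_exp k hk0.ne'⟩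
  have h1 : (1 : ℂ) ∈ nthRootsFinset k (1 : ℂ) := Polynomial.one_mem_nthRootsFinset hk0
  have key : ((X : ℂ[X]) - 1) * ∏ μ ∈ (nthRootsFinset k (1 : ℂ)).erase 1, (X - C μ)
      = (X - 1) * ∑ i ∈ range k, X ^ i := by
    have h2 := X_pow_sub_one_eq_prod hk0 hζ
    rw [← Finset.mul_prod_erase _ _ h1, map_one] at h2
    rw [← h2, ← geom_sum_mul, mul_comm]
  have hXne : (X : ℂ[X]) - 1 ≠ 0 := X_sub_C_ne_zero 1
  have key2 := mul_left_cancel₀ hXne key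
  have := congrArg (Polynomial.eval 1) key2
  simpa [Polynomial.eval_prod] using this

open Finset Polynomial Real in
lemma abs_one_sub_exp (θ : ℝ) (h0 : 0 ≤ θ) (h1 : θ/2 ≤ π) :
    ‖(1 - Complex.exp (θ * Complex.I))‖ = 2 * Real.sin (θ / 2) := by
  have hre : ((1 : ℂ) - Complex.exp (θ * Complex.I)).re = 1 - Real.cos θ := by
    simp [Complex.exp_mul_I, Complex.cos_ofReal_re, Complex.sin_ofReal_re]
  have him : ((1 : ℂ) - Complex.exp (θ * Complex.I)).im = - Real.sin θ := by
    simp [Complex.exp_mul_I, Complex.cos_ofReal_re, Complex.sin_ofReal_re]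
  rw [Complex.norm_def, Complex.normSq_apply, hre, him]
  have hd : Real.cos θ = 2 * Real.cos (θ/2) ^ 2 - 1 := by
    have := Real.cos_two_mul (θ/2); rw [show 2 * (θ/2) = θ by ring] at this; exact this
  have hpy := Real.sin_sq_add_cos_sq (θ/2)
  have hpy2 := Real.sin_sq_add_cos_sq θ
  have hs : 0 ≤ Real.sin (θ/2) := Real.sin_nonneg_of_nonneg_of_le_pi (by linarith) h1
  rw [show (1 - Real.cos θ) * (1 - Real.cos θ) + -Real.sin θ * -Real.sin θ
      = (2 * Real.sin (θ/2))^2 by nlinarith]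
  exact Real.sqrt_sq (by linarith)

open Finset Polynomial Real Complex in
lemma prod_one_sub_pow (k : ℕ) (hk0 : 0 < k)
    (hroot : ∏ μ ∈ (nthRootsFinset k (1 : ℂ)).erase 1, (1 - μ) = (k : ℂ)) :
    ∏ j ∈ Icc 1 (k-1), ((1 : ℂ) - Complex.exp (2 * π * Complex.I / k) ^ j) = (k : ℂ) := by
  set ζ := Complex.exp (2 * π * Complex.I / k) with hζdef
  have hζ : IsPrimitiveRoot ζ k := Complex.isPrimitiveRoot_exp k hk0.ne'
  have : NeZero k := ⟨hk0.ne'⟩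
  rw [← hroot]
  apply Finset.prod_nbij (fun j => ζ ^ j)
  · intro j hj
    simp only [mem_Icc] at hj
    refine Finset.mem_erase.2 ⟨?_, ?_⟩
    · intro h
      have := Nat.le_of_dvd (by omega) ((hζ.pow_eq_one_iff_dvd j).1 h)
      omega
    · exact (Polynomial.mem_nthRootsFinset hk0 1).2
        (by rw [← pow_mul, mul_comm, pow_mul, hζ.pow_eq_one, one_pow])
  · intro a ha b hb hab
    simp only [Finset.coe_Icc, Set.mem_Icc] at ha hb
    exact hζ.pow_inj (by omega) (by omega) hab
  · intro μ hμ
    obtain ⟨hne, hmem⟩ := Finset.mem_erase.1 hμ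
    obtain ⟨i, hik, hi⟩ := hζ.eq_pow_of_pow_eq_one ((Polynomial.mem_nthRootsFinset hk0 1).1 hmem)
    have hi0 : i ≠ 0 := by rintro rfl; simp at hi; exact hne hi.symm
    exact ⟨i, by simp only [Finset.coe_Icc, Set.mem_Icc]; omega, hi⟩
  · intro j hj; rfl

open Finset Real in
lemma sum_log_two_sin (k : ℕ) (hk : 2 ≤ k) :
    ∑ j ∈ Icc 1 (k-1), Real.log (2 * Real.sin (π * j / k)) = Real.log k := by
  have hk0 : 0 < k := by omega
  have hkR : (0 : ℝ) < k := by exact_mod_cast hk0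
  have habs : ∀ j ∈ Icc 1 (k-1),
      ‖(1 - Complex.exp (2 * π * Complex.I / k) ^ j)‖ = 2 * Real.sin (π * j / k) := by
    intro j hj
    simp only [mem_Icc] at hj
    have hθ : Complex.exp (2 * π * Complex.I / k) ^ j
        = Complex.exp (((2 * π * j / k : ℝ) : ℂ) * Complex.I) := by
      rw [← Complex.exp_nat_mul]
      congr 1
      push_cast
      field_simp
    rw [hθ]
    have h1 : (2 * π * j / k) / 2 ≤ π := by
      have hjk : (j : ℝ) ≤ k := by exact_mod_cast Nat.le_of_lt_succ (by omega)
      have := Real.pi_pos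
      rw [div_le_iff₀ (by norm_num : (0:ℝ) < 2), div_le_iff₀ hkR] at *
      nlinarith
    rw [abs_one_sub_exp _ (by positivity) h1]
    congr 1
    ring
  have hprod := prod_one_sub_pow k hk0 (prod_one_sub_root k hk0)
  have habs2 : ∏ j ∈ Icc 1 (k-1), (2 * Real.sin (π * j / k)) = k := by
    have := congrArg (‖·‖) hprod
    rw [norm_prod] at this
    rw [← Finset.prod_congr rfl habs]
    simpa using this
  have hpos : ∀ j ∈ Icc 1 (k-1), (2 * Real.sin (π * j / k)) ≠ 0 := by
    intro j hj
    simp only [mem_Icc] at hj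
    have : 0 < Real.sin (π * j / k) := by
      apply Real.sin_pos_of_pos_of_lt_pi
      · have : (0:ℝ) < j := by exact_mod_cast hj.1
        positivity
      · have hjk : (j : ℝ) < k := by exact_mod_cast (by omega : j < k)
        have := Real.pi_pos
        rw [div_lt_iff₀ hkR]
        nlinarith
    positivity
  rw [← Real.log_prod hpos, habs2]

open Finset Real in
lemma mod_mul_mem (h k : ℕ) (hk : 2 ≤ k) (hgcd : Nat.gcd h k = 1) :
    ∀ j, 1 ≤ j → j ≤ k - 1 → ((j * h) % k ∈ Icc 1 (k-1)) := by
  have hk0 : 0 < k := by omega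
  have hco : Nat.Coprime k h := Nat.Coprime.symm hgcd
  intro j hj1 hj2
  simp only [mem_Icc]
  have hlt : (j * h) % k < k := Nat.mod_lt _ hk0
  have hne : (j * h) % k ≠ 0 := by
    intro h0
    have hdvd : k ∣ j * h := Nat.dvd_of_mod_eq_zero h0
    have := Nat.le_of_dvd (by omega) (hco.dvd_of_dvd_mul_right hdvd)
    omega
  omega

open Finset Real in
lemma sum_mod_bij (h k : ℕ) (hk : 2 ≤ k) (hgcd : Nat.gcd h k = 1) (f : ℕ → ℝ) :
    ∑ j ∈ Icc 1 (k-1), f ((j * h) % k) = ∑ m ∈ Icc 1 (k-1), f m := by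
  have hk0 : 0 < k := by omega
  have hco : Nat.Coprime k h := Nat.Coprime.symm hgcd
  apply Finset.sum_nbij (fun j => (j * h) % k)
  · intro j hj; simp only [mem_Icc] at hj; exact mod_mul_mem h k hk hgcd j hj.1 hj.2
  · intro a ha b hb hab
    simp only [Finset.coe_Icc, Set.mem_Icc] at ha hb
    have : a ≡ b [MOD k] := Nat.ModEq.cancel_right_of_coprime hco hab
    unfold Nat.ModEq at this
    rw [Nat.mod_eq_of_lt (by omega), Nat.mod_eq_of_lt (by omega)] at this
    exact this
  · intro m hm
    simp only [Finset.coe_Icc, Set.mem_Icc] at hm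
    obtain ⟨h', -, hh'⟩ := Nat.exists_mul_mod_eq_one_of_coprime hgcd (by omega)
    have key : ((m * h') % k * h) % k = m := by
      rw [Nat.mod_mul_mod, mul_assoc, mul_comm h' h, Nat.mul_mod, hh', mul_one,
        Nat.mod_mod_of_dvd _ (dvd_refl k), Nat.mod_eq_of_lt (by omega)]
    have hmm : (m * h') % k ∈ Icc 1 (k-1) := by
      have hlt : (m * h') % k < k := Nat.mod_lt _ hk0
      have : (m * h') % k ≠ 0 := by
        intro h0
        rw [h0, Nat.zero_mul, Nat.zero_mod] at key
        omega
      simp only [mem_Icc]; omega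
    exact ⟨(m * h') % k, by simpa using hmm, key⟩
  · intro j hj; rfl

open Finset Real in
lemma sum_Icc_id_real (n : ℕ) : ∑ j ∈ Icc 1 n, (j : ℝ) = n * (n + 1) / 2 := by
  induction n with
  | zero => simp
  | succ n ih =>
    rw [Finset.sum_Icc_succ_top (by omega), ih]
    push_cast; ring

open Finset Real in
lemma sum_Icc_sq_real (n : ℕ) : ∑ j ∈ Icc 1 n, (j : ℝ)^2 = n * (n + 1) * (2 * n + 1) / 6 := by
  induction n with
  | zero => simp
  | succ n ih =>
    rw [Finset.sum_Icc_succ_top (by omega), ih]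
    push_cast; ring

open Finset Real in
lemma sum_B2 (k : ℕ) (hk : 2 ≤ k) :
    ∑ j ∈ Icc 1 (k-1), (((j : ℝ)/k)^2 - (j : ℝ)/k + 1/6) = (1 - (k:ℝ)) / (6*k) := by
  have hkR : (0:ℝ) < k := by exact_mod_cast (by omega : 0 < k)
  have hcast : ((k - 1 : ℕ) : ℝ) = (k : ℝ) - 1 := by
    push_cast [Nat.cast_sub (by omega : 1 ≤ k)]; ring
  have e1 := sum_Icc_id_real (k-1)
  have e2 := sum_Icc_sq_real (k-1)
  rw [hcast] at e1 e2
  have expand : ∀ j ∈ Icc 1 (k-1), (((j : ℝ)/k)^2 - (j : ℝ)/k + 1/6)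
      = (j:ℝ)^2 * (1/k^2) + (j:ℝ) * (-1/k) + 1/6 := by
    intro j hj; field_simp; ring
  rw [Finset.sum_congr rfl expand, Finset.sum_add_distrib, Finset.sum_add_distrib,
    ← Finset.sum_mul, ← Finset.sum_mul, e1, e2, Finset.sum_const, Nat.card_Icc]
  simp only [nsmul_eq_mul]
  have : ((k - 1 + 1 - 1 : ℕ) : ℝ) = (k : ℝ) - 1 := by
    rw [show k - 1 + 1 - 1 = k - 1 from rfl, hcast]
  rw [this]
  field_simp
  ring

open Finset Real in
lemma abs_two_sin_mod (h k j : ℕ) (hk0 : 0 < k) :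
    |2 * Real.sin (π * j * h / k)| = 2 * Real.sin (π * (((j * h) % k : ℕ) : ℝ) / k) := by
  have hkR : (0:ℝ) < k := by exact_mod_cast hk0
  set q := j * h / k with hq
  set m := (j * h) % k with hm
  have hnat : (k : ℝ) * q + m = (j : ℝ) * h := by
    exact_mod_cast congrArg (Nat.cast : ℕ → ℝ) (Nat.div_add_mod (j * h) k)
  have harg : π * (j:ℝ) * h / k = π * m / k + q * π := by
    have e : π * (j:ℝ) * h / k = π * ((k:ℝ) * q + m) / k := by rw [hnat]; ring
    rw [e]
    field_simp
    ring
  rw [harg, Real.sin_add_nat_mul_pi, abs_mul, abs_mul, abs_pow, abs_neg, abs_one,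
    one_pow, one_mul]
  have hmk : (m : ℝ) < k := by exact_mod_cast Nat.mod_lt _ hk0
  have hsin : 0 ≤ Real.sin (π * m / k) := by
    apply Real.sin_nonneg_of_nonneg_of_le_pi
    · positivity
    · rw [div_le_iff₀ hkR]
      nlinarith [Real.pi_pos, (by positivity : (0:ℝ) ≤ π * (m:ℝ))]
  rw [abs_of_nonneg hsin, abs_two]

/-- The generalized Dedekind sum `C_{h,k} = (k/2) ∑_{j=1}^{k-1} B₂(j/k) log|2 sin(π j h/k)|`,
where `B₂(x) = x² - x + 1/6`. -/
noncomputable def Chk (h k : ℕ) : ℝ :=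
  ((k : ℝ) / 2) * ∑ j ∈ Finset.Icc 1 (k - 1),
    (((j : ℝ) / k) ^ 2 - (j : ℝ) / k + 1 / 6) *
      Real.log |2 * Real.sin (Real.pi * j * h / k)|

open Finset Real in
theorem Chk_bounds (h k : ℕ) (hk : 2 ≤ k) (hh1 : 1 ≤ h) (hh : h < k)
    (hgcd : Nat.gcd h k = 1) :
    ((1 - (k : ℝ) ^ 2) / 12) * Real.log 2 + ((k : ℝ) / 12) * Real.log k ≤ Chk h k ∧
    Chk h k ≤ (((k : ℝ) - 1) * ((k : ℝ) - 2) / 24) * Real.log 2 -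
      ((k : ℝ) / 24) * Real.log k := by
  have hk0 : 0 < k := by omega
  have hkR : (0:ℝ) < k := by exact_mod_cast hk0
  have hcast : ((k - 1 : ℕ) : ℝ) = (k : ℝ) - 1 := by
    push_cast [Nat.cast_sub (by omega : 1 ≤ k)]; ring
  set l2 := Real.log 2 with hl2
  set lk := Real.log (k:ℝ) with hlk
  set b : ℕ → ℝ := fun j => ((j : ℝ)/k)^2 - (j : ℝ)/k + 1/6 with hbdef
  set t : ℕ → ℝ := fun n => Real.log (Real.sin (π * (n:ℝ) / k)) with htdef
  -- positivity of sin on interior points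
  have hsinpos : ∀ n ∈ Icc 1 (k-1), 0 < Real.sin (π * (n:ℝ) / k) := by
    intro n hn
    simp only [mem_Icc] at hn
    apply Real.sin_pos_of_pos_of_lt_pi
    · have : (0:ℝ) < n := by exact_mod_cast hn.1
      positivity
    · have hjk : (n : ℝ) < k := by exact_mod_cast (by omega : n < k)
      have := Real.pi_pos
      rw [div_lt_iff₀ hkR]
      nlinarith
  -- splitting the log
  have key : ∀ j ∈ Icc 1 (k-1),
      Real.log |2 * Real.sin (π * j * h / k)| = l2 + t ((j * h) % k) := by
    intro j hj
    simp only [mem_Icc] at hj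
    have hmem := mod_mul_mem h k hk hgcd j hj.1 hj.2
    rw [abs_two_sin_mod h k j hk0,
      Real.log_mul two_ne_zero (ne_of_gt (hsinpos _ hmem))]
  -- sum of t over range
  have e3 : ∑ n ∈ Icc 1 (k-1), t n = lk - ((k:ℝ) - 1) * l2 := by
    have base := sum_log_two_sin k hk
    have split : ∀ n ∈ Icc 1 (k-1),
        Real.log (2 * Real.sin (π * n / k)) = l2 + t n := by
      intro n hn
      rw [Real.log_mul two_ne_zero (ne_of_gt (hsinpos _ hn))]
    rw [Finset.sum_congr rfl split, Finset.sum_add_distrib, Finset.sum_const,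
      Nat.card_Icc] at base
    simp only [nsmul_eq_mul] at base
    have hc : ((k - 1 + 1 - 1 : ℕ) : ℝ) = (k : ℝ) - 1 := by
      rw [show k - 1 + 1 - 1 = k - 1 from rfl, hcast]
    rw [hc] at base
    linarith
  have e2 : ∑ j ∈ Icc 1 (k-1), t ((j * h) % k) = lk - ((k:ℝ) - 1) * l2 := by
    rw [sum_mod_bij h k hk hgcd t, e3]
  have hB : ∑ j ∈ Icc 1 (k-1), b j = (1 - (k:ℝ)) / (6*k) := sum_B2 k hk
  -- bounds on b and t
  have hblb : ∀ j ∈ Icc 1 (k-1), -(1/12) ≤ b j := by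
    intro j hj
    simp only [mem_Icc] at hj
    have hx : (0:ℝ) ≤ (j:ℝ)/k := by positivity
    show -(1/12) ≤ ((j:ℝ)/k)^2 - (j:ℝ)/k + 1/6
    nlinarith [sq_nonneg ((j:ℝ)/k - 1/2)]
  have hbub : ∀ j ∈ Icc 1 (k-1), b j ≤ 1/6 := by
    intro j hj
    simp only [mem_Icc] at hj
    have hx : (0:ℝ) ≤ (j:ℝ)/k := by positivity
    have hx1 : (j:ℝ)/k ≤ 1 := by
      rw [div_le_one hkR]
      exact_mod_cast (by omega : j ≤ k)
    show ((j:ℝ)/k)^2 - (j:ℝ)/k + 1/6 ≤ 1/6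
    nlinarith
  have htle : ∀ j ∈ Icc 1 (k-1), t ((j * h) % k) ≤ 0 := by
    intro j hj
    simp only [mem_Icc] at hj
    exact Real.log_nonpos (le_of_lt (hsinpos _ (mod_mul_mem h k hk hgcd j hj.1 hj.2)))
      (Real.sin_le_one _)
  -- rewrite Chk
  set S := ∑ j ∈ Icc 1 (k-1), b j * t ((j * h) % k) with hSdef
  have hChk : Chk h k = ((k:ℝ)/2) * ((1 - (k:ℝ)) / (6*k) * l2 + S) := by
    unfold Chk
    congr 1
    rw [Finset.sum_congr rfl (fun j hj => by rw [key j hj])]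
    have : ∀ j ∈ Icc 1 (k-1), b j * (l2 + t ((j * h) % k))
        = b j * l2 + b j * t ((j * h) % k) := fun j hj => by ring
    rw [Finset.sum_congr rfl this, Finset.sum_add_distrib, ← Finset.sum_mul, hB]
  -- bounds on S
  have hSub : S ≤ -(1/12) * (lk - ((k:ℝ) - 1) * l2) := by
    calc S ≤ ∑ j ∈ Icc 1 (k-1), -(1/12) * t ((j * h) % k) :=
          Finset.sum_le_sum fun j hj =>
            mul_le_mul_of_nonpos_right (hblb j hj) (htle j hj)
      _ = -(1/12) * (lk - ((k:ℝ) - 1) * l2) := by rw [← Finset.mul_sum, e2]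
  have hSlb : (1/6) * (lk - ((k:ℝ) - 1) * l2) ≤ S := by
    calc (1/6) * (lk - ((k:ℝ) - 1) * l2)
        = ∑ j ∈ Icc 1 (k-1), (1/6) * t ((j * h) % k) := by rw [← Finset.mul_sum, e2]
      _ ≤ S := Finset.sum_le_sum fun j hj =>
          mul_le_mul_of_nonpos_right (hbub j hj) (htle j hj)
  have hk2 : (0:ℝ) ≤ (k:ℝ)/2 := by positivity
  constructor
  · have h1 : ((k:ℝ)/2) * ((1 - (k:ℝ)) / (6*k) * l2 + (1/6) * (lk - ((k:ℝ) - 1) * l2))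
        ≤ Chk h k := by
      rw [hChk]
      exact mul_le_mul_of_nonneg_left (by linarith) hk2
    have h2 : ((k:ℝ)/2) * ((1 - (k:ℝ)) / (6*k) * l2 + (1/6) * (lk - ((k:ℝ) - 1) * l2))
        = ((1 - (k : ℝ) ^ 2) / 12) * l2 + ((k : ℝ) / 12) * lk := by
      field_simp
      ring
    linarith
  · have h1 : Chk h k
        ≤ ((k:ℝ)/2) * ((1 - (k:ℝ)) / (6*k) * l2 + (-(1/12)) * (lk - ((k:ℝ) - 1) * l2)) := by
      rw [hChk]
      exact mul_le_mul_of_nonneg_left (by linarith) hk2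
    have h2 : ((k:ℝ)/2) * ((1 - (k:ℝ)) / (6*k) * l2 + (-(1/12)) * (lk - ((k:ℝ) - 1) * l2))
        = (((k : ℝ) - 1) * ((k : ℝ) - 2) / 24) * l2 - ((k : ℝ) / 24) * lk := by
      field_simp
      ring
    linarith
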